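/- (Causality bound for remote state preparation.) Suppose Alice and Bob share an arbitrary state and Bob applies one of K possible decoding operations (one for each possible classical message), each producing a state ρ_{i,j} when Alice intends message i ∈ {1,…,M} and Bob guesses j ∈ {1,…,K}, and suppose for each i there is a measurement operator 0 ≤ Π_i ≤ 𝟙 with ∑_i Π_i ≤ 𝟙 and Tr(ρ_{i,j(i)} Π_i) ≥ F for the correct decoding j(i). If without any communication from Alice the states Bob can produce are independent of i (i.e., ρ_{i,j} = ρ_j depends only on j), then a guessing strategy succeeds with probability at least F/K, while no-communication strategies succeed with probability at most 1/M; hence K ≥ F·M. -/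

import Mathlib

open Matrix
open scoped ComplexOrder
open scoped MatrixOrder


lemma diag_nn {d : ℕ} {M : Matrix (Fin d) (Fin d) ℂ} (hM : M.PosSemidef) (i : Fin d) :
    0 ≤ (M i i).re := by
  have := hM.re_dotProduct_nonneg (Pi.single i 1)
  simpa [dotProduct, mulVec, Pi.single_apply, Finset.sum_ite_eq] using this

lemma trace_re_nonneg {d : ℕ} {M : Matrix (Fin d) (Fin d) ℂ} (hM : M.PosSemidef) :
    0 ≤ (M.trace).re := by
  rw [Matrix.trace]
  simp only [Complex.re_sum]
  exact Finset.sum_nonneg fun i _ => diag_nn hM i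

lemma trace_mul_re_nonneg {d : ℕ} {A B : Matrix (Fin d) (Fin d) ℂ}
    (hA : A.PosSemidef) (hB : B.PosSemidef) : 0 ≤ ((A * B).trace).re := by
  have h1 : (CFC.sqrt A * B * CFC.sqrt A).trace = (A * B).trace := by
    rw [mul_assoc, trace_mul_comm, mul_assoc, CFC.sqrt_mul_sqrt_self A hA.nonneg, trace_mul_comm]
  have hP : (CFC.sqrt A * B * CFC.sqrt A).PosSemidef := by
    have := hB.conjTranspose_mul_mul_same (CFC.sqrt A)
    rwa [(CFC.sqrt_nonneg A).posSemidef.isHermitian.eq] at this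
  rw [← h1]; exact trace_re_nonneg hP

/-- causality bound: Suppose Bob, receiving no communication from Alice, can
produce one of `K` states `ρ j` (depending only on his guess `j`, not on Alice's message
`i`), and there are measurement operators `0 ≤ Π i` with `∑ i, Π i ≤ 𝟙` such that the
correct decoding `dec i` satisfies `Tr(ρ (dec i) · Π i) ≥ F` for each of `M` messages.
Guessing `j` uniformly succeeds with probability at least `F/K`, while any
no-communication strategy succeeds with probability at most `1/M`; hence `K ≥ F·M`. -/
theorem causality_guessing_bound (d M K : ℕ) (hM : 0 < M) (hK : 0 < K)
    (F : ℝ) (hF0 : 0 ≤ F) (hF1 : F ≤ 1)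
    (ρ : Fin K → Matrix (Fin d) (Fin d) ℂ)
    (hρ : ∀ j, (ρ j).PosSemidef) (hρtr : ∀ j, (ρ j).trace = 1)
    (Pi : Fin M → Matrix (Fin d) (Fin d) ℂ) (hPi : ∀ i, (Pi i).PosSemidef)
    (hPisum : ((1 : Matrix (Fin d) (Fin d) ℂ) - ∑ i, Pi i).PosSemidef)
    (dec : Fin M → Fin K)
    (hgood : ∀ i, F ≤ ((ρ (dec i) * Pi i).trace).re) :
    F * M ≤ K := by
  set t : Fin K → Fin M → ℝ := fun j i => ((ρ j * Pi i).trace).re with ht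
  have htnn : ∀ j i, 0 ≤ t j i := fun j i => trace_mul_re_nonneg (hρ j) (hPi i)
  have step1 : F * M ≤ ∑ i : Fin M, t (dec i) i := by
    calc F * M = ∑ _i : Fin M, F := by
          simp [Finset.sum_const, mul_comm]
      _ ≤ ∑ i : Fin M, t (dec i) i := Finset.sum_le_sum fun i _ => hgood i
  have step2 : ∑ i : Fin M, t (dec i) i ≤ ∑ j : Fin K, ∑ i : Fin M, t j i := by
    rw [Finset.sum_comm]
    refine Finset.sum_le_sum fun i _ => ?_
    exact Finset.single_le_sum (fun j _ => htnn j i) (Finset.mem_univ _)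
  have step3 : ∀ j : Fin K, ∑ i : Fin M, t j i ≤ 1 := by
    intro j
    have key : 0 ≤ ((ρ j * ((1 : Matrix (Fin d) (Fin d) ℂ) - ∑ i, Pi i)).trace).re :=
      trace_mul_re_nonneg (hρ j) hPisum
    have expand : (ρ j * ((1 : Matrix (Fin d) (Fin d) ℂ) - ∑ i, Pi i)).trace
        = (ρ j).trace - ∑ i, (ρ j * Pi i).trace := by
      rw [Matrix.mul_sub, Matrix.mul_one, trace_sub, Matrix.mul_sum, trace_sum]
    rw [expand, hρtr j] at key
    have : ((1 : ℂ) - ∑ i, (ρ j * Pi i).trace).re = 1 - ∑ i : Fin M, t j i := by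
      simp [ht, Complex.re_sum]
    linarith [key, this ▸ key]
  calc F * M ≤ ∑ j : Fin K, ∑ i : Fin M, t j i := step1.trans step2
    _ ≤ ∑ _j : Fin K, (1 : ℝ) := Finset.sum_le_sum fun j _ => step3 j
    _ = K := by simp
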